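/- Let K be a field, let (P_n)_{n∈ℕ} be an eventually linearly recursive sequence of polynomials in K[x], and let a : ℕ → K be an eventually linearly recursive sequence. Then the sequence (P_n ▷ a)_{n∈ℕ} is eventually linearly recursive. -/

import Mathlib

/-- A sequence `a : ℕ → R` in a commutative ring is eventually linearly recursive:
there are `T ≥ 1`, coefficients `c₀,…,c_{T-1} ∈ R` and `N ∈ ℕ` with
`a (n + T) = Σ_{i<T} cᵢ · a (n + i)` for all `n ≥ N`. -/
def EvLinRec {R : Type*} [CommRing R] (a : ℕ → R) : Prop :=
  ∃ T : ℕ, 1 ≤ T ∧ ∃ c : Fin T → R, ∃ N : ℕ, ∀ n ≥ N,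
    a (n + T) = ∑ i : Fin T, c i * a (n + (i : ℕ))

/-- The convolution `P ▷ a = Σ_k (coeff of x^k in P) · a(k)` of a polynomial with a
sequence. -/
def polyTri {K : Type*} [Field K] (P : Polynomial K) (a : ℕ → K) : K :=
  ∑ k ∈ P.support, P.coeff k * a k

open Polynomial

section aux

variable {K : Type*} [Field K]

lemma polyTri_eq_sum (P : Polynomial K) (a : ℕ → K) :
    polyTri P a = P.sum (fun k c => c * a k) := rfl

/-- `polyTri · a` as a linear map. -/
noncomputable def triL (a : ℕ → K) : Polynomial K →ₗ[K] K where
  toFun P := polyTri P a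
  map_add' p q := by
    simp only [polyTri_eq_sum]
    exact Polynomial.sum_add_index p q _ (fun i => zero_mul (a i))
      (fun i b₁ b₂ => add_mul b₁ b₂ (a i))
  map_smul' r p := by
    simp only [polyTri_eq_sum, RingHom.id_apply, smul_eq_mul]
    rw [Polynomial.sum_smul_index p r _ (fun i => zero_mul (a i))]
    unfold Polynomial.sum
    rw [Finset.mul_sum]
    exact Finset.sum_congr rfl (fun k _ => by ring)

lemma triL_X_pow (a : ℕ → K) (k : ℕ) : triL a (X ^ k) = a k := by
  show polyTri (X ^ k) a = a k
  unfold polyTri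
  rw [Polynomial.support_X_pow k, Finset.sum_singleton,
    Polynomial.coeff_X_pow, if_pos rfl, one_mul]

/-- Key finite-dimensional lemma: a linear functional applied to an (eventually)
linearly evolving vector sequence is eventually linearly recursive. -/
lemma evLinRec_of_linear {V : Type*} [AddCommGroup V] [Module K V]
    [FiniteDimensional K V] (f : V →ₗ[K] V) (φ : V →ₗ[K] K) (w : ℕ → V) (N : ℕ)
    (hw : ∀ n ≥ N, w (n + 1) = f (w n)) : EvLinRec (fun n => φ (w n)) := by
  obtain ⟨p, hpm, hp0⟩ := LinearMap.exists_monic_and_aeval_eq_zero K f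
  set q : Polynomial K := p * X with hq
  have hqm : q.Monic := hpm.mul monic_X
  have hq0 : aeval f q = 0 := by rw [hq, map_mul, hp0, zero_mul]
  set r := q.natDegree with hr
  have hr1 : 1 ≤ r := by
    have := Polynomial.natDegree_mul hpm.ne_zero (Polynomial.X_ne_zero (R := K))
    rw [hr, hq, this, Polynomial.natDegree_X]
    omega
  have hfr : (f ^ r : V →ₗ[K] V) = ∑ i ∈ Finset.range r, (-q.coeff i) • (f ^ i) := by
    have h := aeval_eq_sum_range (p := q) f
    rw [hq0] at h
    rw [Finset.sum_range_succ, hqm.coeff_natDegree, one_smul] at h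
    have h2 : f ^ r = -∑ x ∈ Finset.range q.natDegree, q.coeff x • f ^ x :=
      eq_neg_of_add_eq_zero_right h.symm
    rw [h2, ← Finset.sum_neg_distrib]
    exact Finset.sum_congr rfl (fun i _ => (neg_smul _ _).symm)
  have hpow : ∀ n ≥ N, ∀ k : ℕ, w (n + k) = (f ^ k) (w n) := by
    intro n hn k
    induction k with
    | zero => simp
    | succ k ih =>
      rw [← Nat.add_assoc, hw (n + k) (le_trans hn (Nat.le_add_right n k)), ih,
        pow_succ']
      rfl
  refine ⟨r, hr1, fun i => -q.coeff i, N, fun n hn => ?_⟩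
  show φ (w (n + r)) = ∑ i : Fin r, -q.coeff (i : ℕ) * φ (w (n + (i : ℕ)))
  have h1 : φ (w (n + r)) = φ ((f ^ r) (w n)) := by rw [hpow n hn r]
  rw [h1, hfr]
  rw [LinearMap.sum_apply, map_sum, Fin.sum_univ_eq_sum_range
    (fun i => (-q.coeff i) * φ (w (n + i)))]
  refine Finset.sum_congr rfl (fun i hi => ?_)
  rw [LinearMap.smul_apply, map_smul, smul_eq_mul, hpow n hn i]

end aux

/-- if `(P_n)` is an eventually linearly recursive sequence of polynomials
and `a` is an eventually linearly recursive sequence, then `(P_n ▷ a)` is eventually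
linearly recursive. -/
theorem evLinRec_polyTri {K : Type*} [Field K] (P : ℕ → Polynomial K) (hP : EvLinRec P)
    (a : ℕ → K) (ha : EvLinRec a) :
    EvLinRec (fun n => polyTri (P n) a) := by
  classical
  obtain ⟨T, hT1, c, Np, hPrec⟩ := hP
  obtain ⟨S, hS1, d, Na, harec⟩ := ha
  set L := triL a with hL
  set Q0 : Polynomial K := X ^ S - ∑ j : Fin S, C (d j) * X ^ (j : ℕ) with hQ0
  have hQ0m : Q0.Monic := by
    apply Polynomial.monic_X_pow_sub
    apply lt_of_le_of_lt (Polynomial.degree_sum_le _ _)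
    refine (Finset.sup_lt_iff (WithBot.bot_lt_coe S)).mpr (fun j _ => ?_)
    exact lt_of_le_of_lt (Polynomial.degree_C_mul_X_pow_le _ _) (by exact_mod_cast Nat.cast_lt.mpr j.isLt)
  set Q : Polynomial K := X ^ Na * Q0 with hQdef
  have hQm : Q.Monic := (monic_X_pow Na).mul hQ0m
  -- L kills X^m * Q0 for m ≥ Na
  have hLX : ∀ m ≥ Na, L (X ^ m * Q0) = 0 := by
    intro m hm
    have h1 : X ^ m * Q0 = X ^ (m + S) - ∑ j : Fin S, C (d j) * X ^ (m + (j : ℕ)) := by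
      rw [hQ0, mul_sub, ← pow_add, Finset.mul_sum]
      congr 1
      exact Finset.sum_congr rfl (fun j _ => by rw [pow_add]; ring)
    rw [h1, map_sub, map_sum, triL_X_pow]
    have h2 : ∀ j : Fin S, L (C (d j) * X ^ (m + (j : ℕ))) = d j * a (m + (j : ℕ)) := by
      intro j
      rw [← Polynomial.smul_eq_C_mul, map_smul, triL_X_pow, smul_eq_mul]
    rw [Finset.sum_congr rfl (fun j _ => h2 j)]
    rw [harec m hm, sub_self]
  -- L kills multiples of Q
  have hLQ : ∀ M : Polynomial K, L (Q * M) = 0 := by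
    intro M
    conv_lhs => rw [M.as_sum_support]
    rw [Finset.mul_sum, map_sum]
    refine Finset.sum_eq_zero (fun k _ => ?_)
    have h1 : Q * Polynomial.monomial k (M.coeff k) = M.coeff k • (X ^ (Na + k) * Q0) := by
      rw [← Polynomial.C_mul_X_pow_eq_monomial, Polynomial.smul_eq_C_mul, hQdef, pow_add]
      ring
    rw [h1, map_smul, hLX (Na + k) (Nat.le_add_right Na k), smul_zero]
  have hLmod : ∀ p : Polynomial K, L (p %ₘ Q) = L p := by
    intro p
    conv_rhs => rw [← Polynomial.modByMonic_add_div p Q]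
    rw [map_add, hLQ, add_zero]
  have hmodmul : ∀ e p : Polynomial K, (e * (p %ₘ Q)) %ₘ Q = (e * p) %ₘ Q := by
    intro e p
    conv_rhs => rw [← Polynomial.modByMonic_add_div p Q]
    rw [mul_add, Polynomial.add_modByMonic]
    have h0 : (e * (Q * (p /ₘ Q))) %ₘ Q = 0 :=
      (Polynomial.modByMonic_eq_zero_iff_dvd hQm).2 ⟨e * (p /ₘ Q), by ring⟩
    rw [h0, add_zero]
  set D := Q.natDegree with hD
  have hQdeg : Q.degree = (D : WithBot ℕ) := Polynomial.degree_eq_natDegree hQm.ne_zero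
  haveI : FiniteDimensional K (Polynomial.degreeLT K D) :=
    LinearEquiv.finiteDimensional (Polynomial.degreeLTEquiv K D).symm
  set red : Polynomial K →ₗ[K] Polynomial.degreeLT K D :=
    LinearMap.codRestrict (Polynomial.degreeLT K D) (Polynomial.modByMonicHom Q)
      (fun p => Polynomial.mem_degreeLT.2 (hQdeg ▸ Polynomial.degree_modByMonic_lt p hQm))
    with hred
  have hT0 : 0 < T := hT1
  set f : (Fin T → Polynomial.degreeLT K D) →ₗ[K] (Fin T → Polynomial.degreeLT K D) :=
    LinearMap.pi (fun i =>
      if h : (i : ℕ) + 1 < T then LinearMap.proj (⟨(i : ℕ) + 1, h⟩ : Fin T)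
      else ∑ j : Fin T, red ∘ₗ (LinearMap.mulLeft K (c j)) ∘ₗ
        (Polynomial.degreeLT K D).subtype ∘ₗ LinearMap.proj j) with hf
  set w : ℕ → (Fin T → Polynomial.degreeLT K D) := fun n i => red (P (n + (i : ℕ))) with hw
  set φ : (Fin T → Polynomial.degreeLT K D) →ₗ[K] K :=
    L ∘ₗ (Polynomial.degreeLT K D).subtype ∘ₗ LinearMap.proj (⟨0, hT0⟩ : Fin T) with hφ
  have hwstep : ∀ n ≥ Np, w (n + 1) = f (w n) := by
    intro n hn
    funext i
    rw [hf, hw]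
    simp only [LinearMap.pi_apply]
    by_cases h : (i : ℕ) + 1 < T
    · rw [dif_pos h]
      simp only [LinearMap.proj_apply]
      have : n + 1 + (i : ℕ) = n + ((i : ℕ) + 1) := by omega
      rw [this]
    · rw [dif_neg h]
      have : n + 1 + (i : ℕ) = n + T := by omega
      rw [this, hPrec n hn, map_sum, LinearMap.sum_apply]
      refine Finset.sum_congr rfl (fun j _ => ?_)
      simp only [LinearMap.comp_apply, LinearMap.proj_apply, Submodule.coe_subtype,
        LinearMap.mulLeft_apply]
      apply Subtype.ext
      show (c j * P (n + (j : ℕ))) %ₘ Q = (c j * ((P (n + (j : ℕ))) %ₘ Q)) %ₘ Q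
      exact (hmodmul _ _).symm
  have key := evLinRec_of_linear f φ w Np hwstep
  have heq : (fun n => polyTri (P n) a) = fun n => φ (w n) := by
    funext n
    show polyTri (P n) a = L ((P (n + 0)) %ₘ Q)
    rw [hLmod, Nat.add_zero]
    rfl
  rw [heq]
  exact key
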